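/- Let G be a finite median graph, let p and q be vertices, let k ≥ 1, and suppose that the subgraph of G induced by I(p,q) contains no induced subgraph isomorphic to the hypercube graph Q_{k+1}. Then there exists an isometric embedding of I(p,q) into the k-dimensional grid, i.e., a map f : I(p,q) → ℤ^k such that d(u,v) = Σ_{i=1}^{k} |f(u)_i − f(v)_i| for all u, v ∈ I(p,q). -/

import Mathlib

open SimpleGraph Finset

/-- The graph interval `I(u,v)`: vertices on shortest `(u,v)`-paths. -/
def interval {V : Type*} (G : SimpleGraph V) (u v : V) : Set V :=
  {w | G.dist u w + G.dist w v = G.dist u v}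

/-- A median graph: connected, and every triple of vertices has a unique median. -/
def IsMedianGraph {V : Type*} (G : SimpleGraph V) : Prop :=
  G.Connected ∧ ∀ x y z : V, ∃! m : V,
    m ∈ interval G x y ∧ m ∈ interval G y z ∧ m ∈ interval G x z

/-- A set of vertices is (graph) convex if it contains all intervals between its members. -/
def GraphConvex {V : Type*} (G : SimpleGraph V) (S : Set V) : Prop :=
  ∀ u ∈ S, ∀ v ∈ S, interval G u v ⊆ S

/-- A halfspace: a convex set with convex complement. -/
def IsHalfspace {V : Type*} (G : SimpleGraph V) (H : Set V) : Prop :=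
  GraphConvex G H ∧ GraphConvex G Hᶜ

/-- The hypercube graph `Q_k`: vertices are `{0,1}^k`, adjacent iff they differ in exactly
one coordinate. -/
def cubeGraph (k : ℕ) : SimpleGraph (Fin k → Fin 2) :=
  SimpleGraph.fromRel (fun a b => ∃! i, a i ≠ b i)

/-- A graph is cube-free if it has no induced subgraph isomorphic to `Q_3`. -/
def CubeFree {V : Type*} (G : SimpleGraph V) : Prop :=
  ¬ Nonempty (cubeGraph 3 ↪g G)

/-- A 4-cycle of the subgraph of `G` induced by `S`: a 4-element vertex subset of `S`
inducing a cycle of length 4. -/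
def IsFourCycleIn {V : Type*} (G : SimpleGraph V) (S : Set V) (t : Finset V) : Prop :=
  (↑t : Set V) ⊆ S ∧ t.card = 4 ∧ Nonempty (G.induce (↑t : Set V) ≃g SimpleGraph.cycleGraph 4)

section IntervalGridAux



theorem my_dilworth {α : Type*} [PartialOrder α] [DecidableEq α] :
    ∀ (n : ℕ) (S : Finset α) (m : ℕ), S.card = n →
    (∀ A ⊆ S, IsAntichain (· ≤ ·) (A : Set α) → A.card ≤ m) →
    ∃ f : α → ℕ, (∀ x ∈ S, f x < m) ∧
      ∀ x ∈ S, ∀ y ∈ S, f x = f y → x ≤ y ∨ y ≤ x := by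
  intro n
  induction n using Nat.strong_induction_on with
  | _ n IH =>
    intro S m hcard h
    classical
    rcases S.eq_empty_or_nonempty with rfl | hne
    · exact ⟨fun _ => 0, by simp, by simp⟩
    -- a maximal element of S
    obtain ⟨a, haS, hamax⟩ : ∃ a ∈ (↑S : Set α), ∀ a' ∈ (↑S : Set α), id a ≤ id a' → id a = id a' := by
      obtain ⟨a, ha, hm⟩ := Set.Finite.exists_maximalFor id (↑S : Set α)
        S.finite_toSet (by exact_mod_cast hne)
      exact ⟨a, ha, fun x hx hax => le_antisymm hax (hm hx hax)⟩
    simp only [id] at hamax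
    have hamax' : ∀ x ∈ S, a ≤ x → a = x := fun x hx hax => hamax x hx hax
    set S' : Finset α := S.erase a with hS'
    have hS'sub : S' ⊆ S := erase_subset _ _
    have hS'card : S'.card < n := by
      rw [← hcard]; exact card_erase_lt_of_mem haS
    -- the family of antichains of S'
    set F : Finset (Finset α) :=
      S'.powerset.filter (fun A => IsAntichain (· ≤ ·) (A : Set α)) with hF
    have hFmem : ∀ A, A ∈ F ↔ A ⊆ S' ∧ IsAntichain (· ≤ ·) (A : Set α) := by
      intro A; simp [hF, mem_filter, mem_powerset]
    set k : ℕ := F.sup Finset.card with hk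
    have hkmax : ∀ A ⊆ S', IsAntichain (· ≤ ·) (A : Set α) → A.card ≤ k := by
      intro A hA hanti
      exact le_sup ((hFmem A).2 ⟨hA, hanti⟩)
    have hklem : k ≤ m := by
      apply Finset.sup_le
      intro A hA
      obtain ⟨hA1, hA2⟩ := (hFmem A).1 hA
      exact h A (hA1.trans hS'sub) hA2
    have hm1 : 1 ≤ m := by
      have := h {a} (by simpa using haS) (by simp [IsAntichain])
      simpa using this
    rcases lt_or_eq_of_le hklem with hkm | hkm
    · -- easy case : k < m
      obtain ⟨f', hf1, hf2⟩ := IH S'.card hS'card S' k rfl hkmax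
      refine ⟨fun x => if x = a then k else f' x, ?_, ?_⟩
      · intro x hx
        by_cases hxa : x = a
        · simp [hxa, hkm]
        · simp only [hxa, if_false]
          exact lt_trans (hf1 x (mem_erase.2 ⟨hxa, hx⟩)) hkm
      · intro x hx y hy hxy
        by_cases hxa : x = a <;> by_cases hya : y = a
        · left; rw [hxa, hya]
        · exfalso; simp only [hxa, hya, if_true, if_false] at hxy
          exact absurd hxy.symm (Nat.ne_of_lt (hf1 y (mem_erase.2 ⟨hya, hy⟩)))
        · exfalso; simp only [hxa, hya, if_true, if_false] at hxy
          exact absurd hxy (Nat.ne_of_lt (hf1 x (mem_erase.2 ⟨hxa, hx⟩)))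
        · simp only [hxa, hya, if_false] at hxy
          exact hf2 x (mem_erase.2 ⟨hxa, hx⟩) y (mem_erase.2 ⟨hya, hy⟩) hxy
    -- hard case : k = m
    obtain ⟨f', hf1, hf2⟩ := IH S'.card hS'card S' k rfl hkmax
    -- fibers of maximum antichains
    have fiber1 : ∀ A ∈ F, A.card = k → ∀ i ∈ range k,
        (A.filter fun x => f' x = i).card = 1 := by
      intro A hA hAcard i hi
      obtain ⟨hA1, hA2⟩ := (hFmem A).1 hA
      have hsum : ∑ j ∈ range k, (A.filter fun x => f' x = j).card = A.card :=
        (card_eq_sum_card_fiberwise (fun x hx => mem_range.2 (hf1 x (hA1 hx)))).symm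
      have hle1 : ∀ j ∈ range k, (A.filter fun x => f' x = j).card ≤ 1 := by
        intro j _
        rw [card_le_one]
        intro x hx y hy
        simp only [mem_filter] at hx hy
        by_contra hne'
        rcases hf2 x (hA1 hx.1) y (hA1 hy.1) (hx.2.trans hy.2.symm) with hle | hle
        · exact hA2 hx.1 hy.1 hne' hle
        · exact hA2 hy.1 hx.1 (Ne.symm hne') hle
      by_contra hne1
      have hlt : (A.filter fun x => f' x = i).card < 1 :=
        lt_of_le_of_ne (hle1 i hi) hne1
      have : ∑ j ∈ range k, (A.filter fun x => f' x = j).card < ∑ j ∈ range k, 1 :=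
        Finset.sum_lt_sum hle1 ⟨i, hi, hlt⟩
      simp only [Finset.sum_const, card_range, smul_eq_mul, mul_one] at this
      omega
    -- top elements of maximum antichains in each chain
    set T : ℕ → Finset α := fun i =>
      S'.filter (fun x => f' x = i ∧ ∃ A ∈ F, A.card = k ∧ x ∈ A) with hT
    obtain ⟨A₀, hA₀F, hA₀card⟩ : ∃ A ∈ F, A.card = k := by
      have hFne : F.Nonempty := ⟨∅, (hFmem ∅).2 ⟨empty_subset _, by simp [IsAntichain]⟩⟩
      obtain ⟨A, hA, hAk⟩ := Finset.exists_mem_eq_sup F hFne Finset.card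
      exact ⟨A, hA, hAk.symm⟩
    have hTne : ∀ i : {i // i ∈ range k}, ∃ y, y ∈ T i.1 ∧
        ∀ x ∈ T i.1, y ≤ x → y = x := by
      rintro ⟨i, hi⟩
      have : (T i).Nonempty := by
        have h1 := fiber1 A₀ hA₀F hA₀card i hi
        have h2 : (A₀.filter fun x => f' x = i).Nonempty := by
          rw [← card_pos, h1]; norm_num
        obtain ⟨b, hb⟩ := h2
        simp only [mem_filter] at hb
        exact ⟨b, mem_filter.2 ⟨((hFmem A₀).1 hA₀F).1 hb.1, hb.2, A₀, hA₀F, hA₀card, hb.1⟩⟩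
      obtain ⟨y, hy, hymax⟩ : ∃ y ∈ (↑(T i) : Set α), ∀ a' ∈ (↑(T i) : Set α), id y ≤ id a' → id y = id a' := by
        obtain ⟨a, ha, hm⟩ := Set.Finite.exists_maximalFor id (↑(T i) : Set α)
          (T i).finite_toSet (by exact_mod_cast this)
        exact ⟨a, ha, fun x hx hax => le_antisymm hax (hm hx hax)⟩
      exact ⟨y, by exact_mod_cast hy, fun x hx hyx => hymax x (by exact_mod_cast hx) hyx⟩
    choose aa haaT haamax using hTne
    have haaS' : ∀ i, aa i ∈ S' := fun i => mem_of_mem_filter _ (haaT i)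
    have haaf : ∀ i, f' (aa i) = i.1 := fun i => (mem_filter.1 (haaT i)).2.1
    -- key property: members of maximum antichains in chain i lie below aa i
    have key : ∀ i : {i // i ∈ range k}, ∀ A ∈ F, A.card = k →
        ∀ b ∈ A, f' b = i.1 → b ≤ aa i := by
      intro i A hA hAcard b hb hbf
      have hbS' : b ∈ S' := ((hFmem A).1 hA).1 hb
      have hbT : b ∈ T i.1 := mem_filter.2 ⟨hbS', hbf, A, hA, hAcard, hb⟩
      rcases hf2 b hbS' (aa i) (haaS' i) (hbf.trans (haaf i).symm) with hle | hle
      · exact hle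
      · exact le_of_eq (haamax i b hbT hle).symm
    -- the aa's form an antichain
    have haainj : Function.Injective aa := by
      intro i j hij
      have := (haaf i).symm.trans (congrArg f' hij) |>.trans (haaf j)
      exact Subtype.ext this
    have haaanti : ∀ i j : {i // i ∈ range k}, i ≠ j → ¬aa i ≤ aa j := by
      intro i j hij hle
      obtain ⟨A, hA, hAcard, hjA⟩ := (mem_filter.1 (haaT j)).2.2
      have h1 := fiber1 A hA hAcard i.1 i.2
      have h2 : (A.filter fun x => f' x = i.1).Nonempty := by
        rw [← card_pos, h1]; norm_num
      obtain ⟨b, hb⟩ := h2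
      simp only [mem_filter] at hb
      have hbaa : b ≤ aa i := key i A hA hAcard b hb.1 hb.2
      have hbne : b ≠ aa j := by
        intro hbeq
        apply hij
        apply Subtype.ext
        rw [← hb.2, hbeq, haaf j]
      have := ((hFmem A).1 hA).2 hb.1 hjA hbne (hbaa.trans hle)
      exact this
    -- some aa i₀ lies below a
    have hexi : ∃ i₀ : {i // i ∈ range k}, aa i₀ ≤ a := by
      by_contra hno
      push_neg at hno
      have hnever : ∀ i : {i // i ∈ range k}, ¬a ≤ aa i := by
        intro i hle
        have : a = aa i := hamax' (aa i) (hS'sub (haaS' i)) hle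
        exact (ne_of_mem_erase (haaS' i)) this.symm
      set B : Finset α := insert a ((range k).attach.image aa) with hB
      have hBsub : B ⊆ S := by
        intro x hx
        rcases mem_insert.1 hx with rfl | hx
        · exact haS
        · obtain ⟨i, _, rfl⟩ := mem_image.1 hx
          exact hS'sub (haaS' i)
      have hBanti : IsAntichain (· ≤ ·) (↑B : Set α) := by
        intro x hx y hy hxy hle
        simp only [hB, coe_insert, Set.mem_insert_iff, coe_image, Set.mem_image] at hx hy
        rcases hx with rfl | ⟨i, _, rfl⟩
        · rcases hy with rfl | ⟨j, _, rfl⟩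
          · exact hxy rfl
          · exact hnever j hle
        · rcases hy with rfl | ⟨j, _, rfl⟩
          · exact hno i hle
          · have hij : i ≠ j := fun hij => hxy (congrArg aa hij)
            exact haaanti i j hij hle
      have hBcard : B.card = k + 1 := by
        rw [hB, card_insert_of_notMem, card_image_of_injective _ haainj]
        · simp
        · intro hmem
          obtain ⟨i, _, hieq⟩ := mem_image.1 hmem
          exact (ne_of_mem_erase (haaS' i)) hieq
      have := h B hBsub hBanti
      rw [hBcard, hkm] at this
      omega
    obtain ⟨i₀, hi₀⟩ := hexi
    -- the chain K through a
    set K : Finset α := insert a (S'.filter (fun x => f' x = i₀.1 ∧ x ≤ aa i₀)) with hK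
    have hKchain : ∀ x ∈ K, ∀ y ∈ K, x ≤ y ∨ y ≤ x := by
      intro x hx y hy
      rcases mem_insert.1 hx with rfl | hx <;> rcases mem_insert.1 hy with rfl | hy
      · left; rfl
      · right
        obtain ⟨_, _, hle⟩ := mem_filter.1 hy
        exact hle.trans hi₀
      · left
        obtain ⟨_, _, hle⟩ := mem_filter.1 hx
        exact hle.trans hi₀
      · obtain ⟨hx1, hx2, _⟩ := mem_filter.1 hx
        obtain ⟨hy1, hy2, _⟩ := mem_filter.1 hy
        exact hf2 x hx1 y hy1 (hx2.trans hy2.symm)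
    set S'' : Finset α := S \ K with hS''
    have hS''sub : S'' ⊆ S' := by
      intro x hx
      obtain ⟨hx1, hx2⟩ := mem_sdiff.1 hx
      exact mem_erase.2 ⟨fun hxa => hx2 (hxa ▸ mem_insert_self _ _), hx1⟩
    have hS''card : S''.card < n := by
      rw [← hcard]
      apply card_lt_card
      constructor
      · exact sdiff_subset
      · intro hsub
        have := hsub haS
        exact (mem_sdiff.1 this).2 (mem_insert_self _ _)
    have hS''bound : ∀ B ⊆ S'', IsAntichain (· ≤ ·) (↑B : Set α) → B.card ≤ m - 1 := by
      intro B hBsub hBanti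
      have hBk : B.card ≤ k := hkmax B (hBsub.trans hS''sub) hBanti
      rcases lt_or_eq_of_le hBk with hlt | heq
      · omega
      · exfalso
        have hBF : B ∈ F := (hFmem B).2 ⟨hBsub.trans hS''sub, hBanti⟩
        have h1 := fiber1 B hBF heq i₀.1 i₀.2
        have h2 : (B.filter fun x => f' x = i₀.1).Nonempty := by
          rw [← card_pos, h1]; norm_num
        obtain ⟨b, hb⟩ := h2
        simp only [mem_filter] at hb
        have hbaa : b ≤ aa i₀ := key i₀ B hBF heq b hb.1 hb.2
        have hbK : b ∈ K := by
          apply mem_insert_of_mem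
          exact mem_filter.2 ⟨(hBsub.trans hS''sub) hb.1, hb.2, hbaa⟩
        exact (mem_sdiff.1 (hBsub hb.1)).2 hbK
    obtain ⟨f'', hf''1, hf''2⟩ := IH S''.card hS''card S'' (m - 1) rfl hS''bound
    refine ⟨fun x => if x ∈ K then m - 1 else f'' x, ?_, ?_⟩
    · intro x hx
      by_cases hxK : x ∈ K
      · simp only [hxK, if_true]; omega
      · simp only [hxK, if_false]
        have : x ∈ S'' := mem_sdiff.2 ⟨hx, hxK⟩
        have := hf''1 x this
        omega
    · intro x hx y hy hxy
      by_cases hxK : x ∈ K <;> by_cases hyK : y ∈ K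
      · exact hKchain x hxK y hyK
      · exfalso
        simp only [hxK, hyK, if_true, if_false] at hxy
        have := hf''1 y (mem_sdiff.2 ⟨hy, hyK⟩)
        omega
      · exfalso
        simp only [hxK, hyK, if_true, if_false] at hxy
        have := hf''1 x (mem_sdiff.2 ⟨hx, hxK⟩)
        omega
      · simp only [hxK, hyK, if_false] at hxy
        exact hf''2 x (mem_sdiff.2 ⟨hx, hxK⟩) y (mem_sdiff.2 ⟨hy, hyK⟩) hxy

section LatAux

variable {L : Type*} [DistribLattice L] [Fintype L]

/-- The set of sup-irreducible elements below `u`. -/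
noncomputable def DDset (u : L) : Finset L :=
  @Finset.filter _ (fun j => SupIrred j ∧ j ≤ u) (Classical.decPred _) Finset.univ

/-- The rank of `u` : the number of sup-irreducibles below `u`. -/
noncomputable def rkk (u : L) : ℕ := (DDset u).card

lemma mem_DDset {u j : L} : j ∈ DDset u ↔ SupIrred j ∧ j ≤ u := by
  simp [DDset, Finset.mem_filter]

lemma DDset_mono {u v : L} (h : u ≤ v) : DDset u ⊆ DDset v := by
  intro j hj
  rw [mem_DDset] at *
  exact ⟨hj.1, hj.2.trans h⟩

lemma DDset_inf [DecidableEq L] (u v : L) : DDset (u ⊓ v) = DDset u ∩ DDset v := by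
  ext j
  simp only [mem_DDset, Finset.mem_inter, le_inf_iff]
  tauto

lemma DDset_sup [DecidableEq L] (u v : L) : DDset (u ⊔ v) = DDset u ∪ DDset v := by
  ext j
  simp only [mem_DDset, Finset.mem_union]
  constructor
  · rintro ⟨hj, hle⟩
    rcases (hj.supPrime.le_sup).1 hle with h | h
    · exact Or.inl ⟨hj, h⟩
    · exact Or.inr ⟨hj, h⟩
  · rintro (⟨hj, h⟩ | ⟨hj, h⟩)
    · exact ⟨hj, h.trans le_sup_left⟩
    · exact ⟨hj, h.trans le_sup_right⟩

variable [OrderBot L]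

lemma sup_DDset (u : L) : (DDset u).sup id = u := by
  induction u using WellFoundedLT.induction with
  | _ u IHu =>
    apply le_antisymm
    · apply Finset.sup_le
      intro j hj
      exact (mem_DDset.1 hj).2
    · by_cases hbot : u = ⊥
      · simp [hbot]
      by_cases hirr : SupIrred u
      · exact Finset.le_sup (f := id) (mem_DDset.2 ⟨hirr, le_refl u⟩)
      · have : ∃ b c : L, b ⊔ c = u ∧ b ≠ u ∧ c ≠ u := by
          rw [SupIrred, not_and_or] at hirr
          push_neg at hirr
          rcases hirr with h | h
          · exact absurd h.eq_bot hbot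
          · exact h
        obtain ⟨b, c, hbc, hbu, hcu⟩ := this
        have hblt : b < u := lt_of_le_of_ne (hbc ▸ le_sup_left) hbu
        have hclt : c < u := lt_of_le_of_ne (hbc ▸ le_sup_right) hcu
        calc u = b ⊔ c := hbc.symm
        _ ≤ (DDset b).sup id ⊔ (DDset c).sup id := by
            rw [IHu b hblt, IHu c hclt]
        _ ≤ (DDset u).sup id ⊔ (DDset u).sup id :=
            sup_le_sup (Finset.sup_mono (DDset_mono hblt.le))
              (Finset.sup_mono (DDset_mono hclt.le))
        _ = (DDset u).sup id := sup_idem _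

lemma DDset_injective : Function.Injective (DDset (L := L)) := by
  intro u v h
  rw [← sup_DDset u, ← sup_DDset v, h]

lemma DDset_covby [DecidableEq L] {u v : L} (h : u ⋖ v) : ∃ j ∉ DDset u,
    DDset v = insert j (DDset u) := by
  have hsub : DDset u ⊆ DDset v := DDset_mono h.le
  have hne : DDset u ≠ DDset v := fun he => h.lt.ne (DDset_injective he)
  have hdne : (DDset v \ DDset u).Nonempty := by
    rw [Finset.sdiff_nonempty]
    intro hcon
    exact hne (Finset.Subset.antisymm hsub hcon)
  -- take a minimal element of the difference
  obtain ⟨j, hj, hjmin⟩ : ∃ j ∈ (↑(DDset v \ DDset u) : Set L),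
      ∀ a' ∈ (↑(DDset v \ DDset u) : Set L), id a' ≤ id j → id j = id a' := by
    obtain ⟨a, ha, hm⟩ := Set.Finite.exists_minimalFor id (↑(DDset v \ DDset u) : Set L)
      (DDset v \ DDset u).finite_toSet (by exact_mod_cast hdne)
    exact ⟨a, ha, fun x hx hax => le_antisymm (hm hx hax) hax⟩
  simp only [id] at hjmin
  have hj' : j ∈ DDset v \ DDset u := by exact_mod_cast hj
  obtain ⟨hjv, hju⟩ := Finset.mem_sdiff.1 hj'
  -- u ⊔ j = v
  have hjle : j ≤ v := (mem_DDset.1 hjv).2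
  have huj : u < u ⊔ j := by
    rcases lt_or_eq_of_le (le_sup_left : u ≤ u ⊔ j) with hlt | heq
    · exact hlt
    · exfalso; apply hju
      rw [mem_DDset]
      exact ⟨(mem_DDset.1 hjv).1, le_trans le_sup_right heq.symm.le⟩
  have hujv : u ⊔ j = v := by
    have hle' : u ⊔ j ≤ v := sup_le h.le hjle
    rcases lt_or_eq_of_le hle' with hlt | heq
    · exact absurd hlt (h.2 huj)
    · exact heq
  refine ⟨j, hju, ?_⟩
  rw [← hujv, DDset_sup]
  ext x
  simp only [Finset.mem_union, Finset.mem_insert]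
  constructor
  · rintro (hx | hx)
    · exact Or.inr hx
    · -- x supirred, x ≤ j; if x = j done, else x < j hence x ∈ DDset u by minimality
      rcases eq_or_lt_of_le (mem_DDset.1 hx).2 with he | hlt
      · exact Or.inl he
      · right
        by_contra hxu
        have hxmem : x ∈ DDset v \ DDset u :=
          Finset.mem_sdiff.2 ⟨mem_DDset.2 ⟨(mem_DDset.1 hx).1, hlt.le.trans hjle⟩, hxu⟩
        have := hjmin x (by exact_mod_cast hxmem) hlt.le
        exact hlt.ne' this
  · rintro (rfl | hx)
    · exact Or.inr (mem_DDset.2 ⟨(mem_DDset.1 hjv).1, le_refl _⟩)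
    · exact Or.inl hx

lemma rkk_covby [DecidableEq L] {u v : L} (h : u ⋖ v) : rkk v = rkk u + 1 := by
  obtain ⟨j, hj, he⟩ := DDset_covby h
  rw [rkk, rkk, he, Finset.card_insert_of_notMem hj]

lemma rkk_bot : rkk (⊥ : L) = 0 := by
  rw [rkk, Finset.card_eq_zero]
  ext j
  simp only [mem_DDset, Finset.notMem_empty, iff_false]
  rintro ⟨hj, hle⟩
  exact hj.1 (le_bot_iff.1 hle ▸ isMin_bot)

/-- A function that is zero at ⊥ and graded along covers equals the rank. -/
lemma phi_eq_rkk [DecidableEq L] (φ : L → ℕ) (hbot : φ ⊥ = 0)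
    (hgrade : ∀ u v : L, u ⋖ v → φ v = φ u + 1) : ∀ u, φ u = rkk u := by
  intro u
  induction u using WellFoundedLT.induction with
  | _ u IHu =>
    by_cases hb : u = ⊥
    · rw [hb, hbot, rkk_bot]
    · have hlt : ⊥ < u := bot_lt_iff_ne_bot.2 hb
      -- find a lower cover of u
      obtain ⟨w, hw, hwmax⟩ : ∃ w ∈ ({x : L | x < u}), ∀ a' ∈ ({x : L | x < u}), id w ≤ id a' → id w = id a' := by
        obtain ⟨a, ha, hm⟩ := Set.Finite.exists_maximalFor id ({x : L | x < u})
          (Set.toFinite _) ⟨⊥, hlt⟩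
        exact ⟨a, ha, fun x hx hax => le_antisymm hax (hm hx hax)⟩
      simp only [id] at hwmax
      have hwu : w < u := hw
      have hcov : w ⋖ u := by
        refine ⟨hwu, fun c hc hcu => ?_⟩
        exact absurd (hwmax c hcu hc.le) hc.ne
      rw [hgrade w u hcov, rkk_covby hcov, IHu w hwu]

/-- Any downward-closed (within sup-irreducibles) family of sup-irreducibles
is realized as `DDset` of its sup. -/
lemma DDset_sup_family (F : Finset L) (hirr : ∀ j ∈ F, SupIrred j)
    (hdc : ∀ j, SupIrred j → ∀ i ∈ F, j ≤ i → j ∈ F) :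
    DDset (F.sup id) = F := by
  ext x
  simp only [mem_DDset]
  constructor
  · rintro ⟨hx, hle⟩
    obtain ⟨i, hi, hxi⟩ := (hx.supPrime.le_finset_sup).1 hle
    exact hdc x hx i hi hxi
  · intro hx
    exact ⟨hirr x hx, Finset.le_sup (f := id) hx⟩

end LatAux

theorem abs_cast_min (a b : ℕ) : |(a : ℤ) - b| = (a : ℤ) + b - 2 * min a b := by
  rcases le_total a b with h | h
  · rw [abs_of_nonpos (by simpa using (Nat.cast_le (α := ℤ)).2 h), Nat.min_eq_left h]
    ring
  · rw [abs_of_nonneg (by simpa using (Nat.cast_le (α := ℤ)).2 h), Nat.min_eq_right h]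
    ring

theorem latA {L : Type*} [DistribLattice L] [Fintype L] [DecidableEq L] (k : ℕ)
    (hac : ∀ A : Finset L, (∀ a ∈ A, SupIrred a) → IsAntichain (· ≤ ·) (A : Set L) →
      A.card ≤ k) :
    ∃ f : L → Fin k → ℤ, ∀ u v : L,
      (rkk u : ℤ) + rkk v - 2 * rkk (u ⊓ v) = ∑ i : Fin k, |f u i - f v i| := by
  classical
  set S : Finset L := Finset.univ.filter (fun x => SupIrred x) with hS
  obtain ⟨col, hcol1, hcol2⟩ := my_dilworth S.card S k rfl (by
    intro A hA hanti
    exact hac A (fun a ha => (mem_filter.1 (hA ha)).2) hanti)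
  set F : L → ℕ → ℕ := fun u i => ((DDset u).filter (fun j => col j = i)).card with hFdef
  have key1 : ∀ u : L, rkk u = ∑ i ∈ range k, F u i := by
    intro u
    apply card_eq_sum_card_fiberwise
    intro x hx
    exact mem_range.2 (hcol1 x (mem_filter.2 ⟨mem_univ x, (mem_DDset.1 hx).1⟩))
  have key2 : ∀ u v : L, ∀ i, F (u ⊓ v) i = min (F u i) (F v i) := by
    intro u v i
    have hsub : ((DDset u).filter (fun j => col j = i)) ⊆ ((DDset v).filter (fun j => col j = i))
        ∨ ((DDset v).filter (fun j => col j = i)) ⊆ ((DDset u).filter (fun j => col j = i)) := by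
      by_contra hcon
      push_neg at hcon
      obtain ⟨x, hx, hxv⟩ := not_subset.1 hcon.1
      obtain ⟨y, hy, hyu⟩ := not_subset.1 hcon.2
      simp only [mem_filter] at hx hy hxv hyu
      have hxS : x ∈ S := mem_filter.2 ⟨mem_univ x, (mem_DDset.1 hx.1).1⟩
      have hyS : y ∈ S := mem_filter.2 ⟨mem_univ y, (mem_DDset.1 hy.1).1⟩
      rcases hcol2 x hxS y hyS (hx.2.trans hy.2.symm) with hle | hle
      · exact hxv ⟨mem_DDset.2 ⟨(mem_DDset.1 hx.1).1, hle.trans (mem_DDset.1 hy.1).2⟩, hx.2⟩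
      · exact hyu ⟨mem_DDset.2 ⟨(mem_DDset.1 hy.1).1, hle.trans (mem_DDset.1 hx.1).2⟩, hy.2⟩
    have hint : F (u ⊓ v) i = (((DDset u).filter (fun j => col j = i)) ∩
        ((DDset v).filter (fun j => col j = i))).card := by
      simp only [hFdef]
      congr 1
      rw [DDset_inf]
      ext x
      simp only [mem_filter, mem_inter]
      tauto
    rcases hsub with hsub | hsub
    · rw [hint, Finset.inter_eq_left.2 hsub]
      exact (Nat.min_eq_left (card_le_card hsub)).symm
    · rw [hint, Finset.inter_eq_right.2 hsub]
      exact (Nat.min_eq_right (card_le_card hsub)).symm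
  refine ⟨fun u i => (F u i.1 : ℤ), ?_⟩
  intro u v
  have e1 : ∑ i : Fin k, |(F u i.1 : ℤ) - F v i.1| =
      ∑ i ∈ range k, |(F u i : ℤ) - F v i| :=
    Fin.sum_univ_eq_sum_range (fun i => |(F u i : ℤ) - F v i|) k
  rw [e1, key1 u, key1 v, key1 (u ⊓ v)]
  have e2 : ∀ i ∈ range k, |(F u i : ℤ) - F v i| =
      (F u i : ℤ) + F v i - 2 * F (u ⊓ v) i := by
    intro i _
    rw [key2 u v i, abs_cast_min]
  rw [Finset.sum_congr rfl e2]
  push_cast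
  rw [Finset.sum_sub_distrib, Finset.sum_add_distrib, ← Finset.mul_sum]

theorem latB {L : Type*} [DistribLattice L] [OrderBot L] [Fintype L] [DecidableEq L] (r : ℕ)
    (c : Fin r → L) (hinj : Function.Injective c) (hirr : ∀ i, SupIrred (c i))
    (hanti : ∀ i j, i ≠ j → ¬c i ≤ c j) :
    ∃ g : (Fin r → Fin 2) → L, ∀ A B : Fin r → Fin 2,
      (rkk (g A) : ℤ) + rkk (g B) - 2 * rkk (g A ⊓ g B) =
        ((Finset.univ.filter fun i => A i ≠ B i).card : ℤ) := by
  classical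
  set E : Finset L := Finset.univ.filter (fun x => SupIrred x ∧ ∃ i, x < c i) with hE
  set FA : (Fin r → Fin 2) → Finset L :=
    fun A => E ∪ (Finset.univ.filter fun i => A i = 1).image c with hFA
  have hcE : ∀ i, c i ∉ E := by
    intro i hi
    obtain ⟨_, _, j, hj⟩ := mem_filter.1 hi
    rcases eq_or_ne i j with rfl | hne
    · exact lt_irrefl _ hj
    · exact hanti i j hne hj.le
  have hFAirr : ∀ A, ∀ j ∈ FA A, SupIrred j := by
    intro A j hj
    rcases mem_union.1 hj with hj | hj
    · exact (mem_filter.1 hj).2.1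
    · obtain ⟨i, _, rfl⟩ := mem_image.1 hj
      exact hirr i
  have hFAdc : ∀ A, ∀ j, SupIrred j → ∀ x ∈ FA A, j ≤ x → j ∈ FA A := by
    intro A j hjirr x hx hjx
    rcases mem_union.1 hx with hx | hx
    · obtain ⟨_, _, i, hi⟩ := mem_filter.1 hx
      exact mem_union_left _ (mem_filter.2 ⟨mem_univ j, hjirr, i, lt_of_le_of_lt hjx hi⟩)
    · obtain ⟨i, hi, rfl⟩ := mem_image.1 hx
      rcases eq_or_lt_of_le hjx with rfl | hlt
      · exact mem_union_right _ (mem_image.2 ⟨i, hi, rfl⟩)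
      · exact mem_union_left _ (mem_filter.2 ⟨mem_univ j, hjirr, i, hlt⟩)
  set g : (Fin r → Fin 2) → L := fun A => (FA A).sup id with hg
  have hDD : ∀ A, DDset (g A) = FA A :=
    fun A => DDset_sup_family (FA A) (hFAirr A) (hFAdc A)
  have hdisj : ∀ A : Fin r → Fin 2,
      Disjoint E ((Finset.univ.filter fun i => A i = 1).image c) := by
    intro A
    rw [Finset.disjoint_right]
    intro x hx
    obtain ⟨i, _, rfl⟩ := mem_image.1 hx
    exact hcE i
  have hcardFA : ∀ A : Fin r → Fin 2,
      (FA A).card = E.card + (Finset.univ.filter fun i => A i = 1).card := by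
    intro A
    rw [hFA]
    rw [card_union_of_disjoint (hdisj A), card_image_of_injective _ hinj]
  have hinter : ∀ A B : Fin r → Fin 2, FA A ∩ FA B =
      E ∪ (Finset.univ.filter fun i => A i = 1 ∧ B i = 1).image c := by
    intro A B
    ext x
    simp only [hFA, mem_union, mem_inter, mem_image, mem_filter, mem_univ, true_and]
    constructor
    · rintro ⟨hA | ⟨i, hi, rfl⟩, hB | hB⟩
      · exact Or.inl hA
      · exact Or.inl hA
      · exact Or.inl hB
      · obtain ⟨j, hj, hji⟩ := hB
        exact Or.inr ⟨i, ⟨hi, by rwa [← hinj hji]⟩, rfl⟩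
    · rintro (hx | ⟨i, ⟨h1, h2⟩, rfl⟩)
      · exact ⟨Or.inl hx, Or.inl hx⟩
      · exact ⟨Or.inr ⟨i, h1, rfl⟩, Or.inr ⟨i, h2, rfl⟩⟩
  refine ⟨g, fun A B => ?_⟩
  have h1 : rkk (g A) = E.card + (Finset.univ.filter fun i => A i = 1).card := by
    rw [rkk, hDD, hcardFA]
  have h2 : rkk (g B) = E.card + (Finset.univ.filter fun i => B i = 1).card := by
    rw [rkk, hDD, hcardFA]
  have h3 : rkk (g A ⊓ g B) =
      E.card + (Finset.univ.filter fun i => A i = 1 ∧ B i = 1).card := by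
    rw [rkk, DDset_inf, hDD, hDD, hinter]
    rw [card_union_of_disjoint, card_image_of_injective _ hinj]
    rw [Finset.disjoint_right]
    intro x hx
    obtain ⟨i, _, rfl⟩ := mem_image.1 hx
    exact hcE i
  rw [h1, h2, h3]
  have hpt : ∀ a b : Fin 2, ((if a ≠ b then 1 else 0) : ℕ) +
      2 * (if a = 1 ∧ b = 1 then 1 else 0) = (if a = 1 then 1 else 0) + (if b = 1 then 1 else 0)
    := by decide
  have hcards : (Finset.univ.filter fun i => A i ≠ B i).card +
      2 * (Finset.univ.filter fun i => A i = 1 ∧ B i = 1).card =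
      (Finset.univ.filter fun i => A i = 1).card +
      (Finset.univ.filter fun i => B i = 1).card := by
    simp only [Finset.card_filter]
    rw [Finset.mul_sum, ← Finset.sum_add_distrib, ← Finset.sum_add_distrib]
    exact Finset.sum_congr rfl (fun i _ => hpt (A i) (B i))
  push_cast
  have := congrArg (fun x : ℕ => (x : ℤ)) hcards
  push_cast at this
  linarith

section MedianRaw

variable {V : Type*} {G : SimpleGraph V}

lemma mem_interval_iff {u v w : V} :
    w ∈ interval G u v ↔ G.dist u w + G.dist w v = G.dist u v := Iff.rfl

lemma interval_comm (u v : V) : interval G u v = interval G v u := by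
  ext w
  simp only [mem_interval_iff]
  have e1 : G.dist u w = G.dist w u := dist_comm ..
  have e2 : G.dist v w = G.dist w v := dist_comm ..
  have e3 : G.dist u v = G.dist v u := dist_comm ..
  omega

lemma left_mem_interval (hc : G.Connected) (u v : V) : u ∈ interval G u v := by
  simp [mem_interval_iff]

lemma right_mem_interval (hc : G.Connected) (u v : V) : v ∈ interval G u v := by
  simp [mem_interval_iff]

/-- First step on a geodesic. -/
lemma exists_step (hc : G.Connected) {u v : V} (h : u ≠ v) :
    ∃ w, G.dist u w = 1 ∧ G.dist u w + G.dist w v = G.dist u v := by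
  obtain ⟨W, hW⟩ := (hc u v).exists_walk_length_eq_dist
  have hpos : 0 < G.dist u v := hc.pos_dist_of_ne h
  cases W with
  | nil => rw [← hW] at hpos; simp at hpos
  | cons hadj W' =>
    rename_i w
    have h1 : G.dist u w = 1 := dist_eq_one_iff_adj.2 hadj
    have h2 : G.dist w v ≤ W'.length := dist_le W'
    have h3 : G.dist u v ≤ G.dist u w + G.dist w v := hc.dist_triangle
    simp only [Walk.length_cons] at hW
    refine ⟨w, h1, ?_⟩
    omega

/-- The median of three vertices. -/
noncomputable def med (hG : IsMedianGraph G) (x y z : V) : V := (hG.2 x y z).choose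

lemma med_mem₁ (hG : IsMedianGraph G) (x y z : V) : med hG x y z ∈ interval G x y :=
  (hG.2 x y z).choose_spec.1.1

lemma med_mem₂ (hG : IsMedianGraph G) (x y z : V) : med hG x y z ∈ interval G y z :=
  (hG.2 x y z).choose_spec.1.2.1

lemma med_mem₃ (hG : IsMedianGraph G) (x y z : V) : med hG x y z ∈ interval G x z :=
  (hG.2 x y z).choose_spec.1.2.2

lemma med_unique (hG : IsMedianGraph G) {x y z m : V} (h1 : m ∈ interval G x y)
    (h2 : m ∈ interval G y z) (h3 : m ∈ interval G x z) : m = med hG x y z :=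
  (hG.2 x y z).choose_spec.2 m ⟨h1, h2, h3⟩

/-- Intervals from the endpoint are contained in the big interval. -/
lemma interval_left_subset (hc : G.Connected) {p q u : V} (hu : u ∈ interval G p q) :
    interval G p u ⊆ interval G p q := by
  intro x hx
  rw [mem_interval_iff] at *
  have t1 : G.dist p q ≤ G.dist p x + G.dist x q := hc.dist_triangle
  have t2 : G.dist x q ≤ G.dist x u + G.dist u q := hc.dist_triangle
  omega

lemma interval_right_subset (hc : G.Connected) {p q u : V} (hu : u ∈ interval G p q) :
    interval G u q ⊆ interval G p q := by
  intro x hx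
  rw [mem_interval_iff] at *
  have t1 : G.dist p q ≤ G.dist p x + G.dist x q := hc.dist_triangle
  have t2 : G.dist p x ≤ G.dist p u + G.dist u x := hc.dist_triangle
  omega

/-- The median toward a basepoint is a greatest lower bound for betweenness. -/
lemma med_glb (hG : IsMedianGraph G) (hc : G.Connected) {b u v w : V}
    (h1 : w ∈ interval G b u) (h2 : w ∈ interval G b v) :
    w ∈ interval G b (med hG u v b) := by
  set t := med hG u v w with ht
  have htuv : t ∈ interval G u v := med_mem₁ hG u v w
  have htvw : t ∈ interval G v w := med_mem₂ hG u v w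
  have htuw : t ∈ interval G u w := med_mem₃ hG u v w
  rw [mem_interval_iff] at h1 h2 htuv htvw htuw
  have tri1 : G.dist b t ≤ G.dist b w + G.dist w t := hc.dist_triangle
  have tri2 : G.dist b u ≤ G.dist b t + G.dist t u := hc.dist_triangle
  have e1 : G.dist w t = G.dist t w := dist_comm ..
  have e2 : G.dist u t = G.dist t u := dist_comm ..
  have e3 : G.dist v t = G.dist t v := dist_comm ..
  have e4 : G.dist w u = G.dist u w := dist_comm ..
  have e5 : G.dist w v = G.dist v w := dist_comm ..
  -- t is between b and u, with w between b and t
  have hbt : G.dist b w + G.dist w t = G.dist b t ∧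
      G.dist b t + G.dist t u = G.dist b u := by
    constructor <;> omega
  have hbtv : G.dist b t + G.dist t v = G.dist b v := by
    have tri3 : G.dist b v ≤ G.dist b t + G.dist t v := hc.dist_triangle
    omega
  have : t = med hG u v b := by
    apply med_unique hG
    · rwa [mem_interval_iff]
    · rw [interval_comm, mem_interval_iff]; exact hbtv
    · rw [interval_comm, mem_interval_iff]; exact hbt.2
  rw [mem_interval_iff, ← this]
  exact hbt.1

/-- If `u ∈ I(p,q)` then `u` is between `p` and the median `med u v q`. -/
lemma med_le_join (hG : IsMedianGraph G) (hc : G.Connected) {p q u v : V}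
    (hu : u ∈ interval G p q) :
    u ∈ interval G p (med hG u v q) := by
  set m := med hG u v q with hm
  have hmq : m ∈ interval G u q := med_mem₃ hG u v q
  rw [mem_interval_iff] at *
  have t1 : G.dist p m ≤ G.dist p u + G.dist u m := hc.dist_triangle
  have t2 : G.dist p q ≤ G.dist p m + G.dist m q := hc.dist_triangle
  omega

/-- Duality between order from `p` and order from `q` inside the interval. -/
lemma le_dual (hc : G.Connected) {p q u v : V} (hu : u ∈ interval G p q)
    (hv : v ∈ interval G p q) :
    (G.dist p u + G.dist u v = G.dist p v) ↔
      (G.dist u v + G.dist v q = G.dist u q) := by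
  rw [mem_interval_iff] at hu hv
  have t1 : G.dist p v ≤ G.dist p u + G.dist u v := hc.dist_triangle
  have t2 : G.dist u q ≤ G.dist u v + G.dist v q := hc.dist_triangle
  omega

/-- Distance formula via the meet-median. -/
lemma dist_formula_meet (hG : IsMedianGraph G) (p : V) (u v : V) :
    G.dist u v + 2 * G.dist p (med hG u v p) = G.dist p u + G.dist p v := by
  set m := med hG u v p with hm
  have h1 : m ∈ interval G u v := med_mem₁ hG u v p
  have h2 : m ∈ interval G v p := med_mem₂ hG u v p
  have h3 : m ∈ interval G u p := med_mem₃ hG u v p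
  rw [mem_interval_iff] at h1 h2 h3
  have e1 : G.dist v m = G.dist m v := dist_comm ..
  have e2 : G.dist u m = G.dist m u := dist_comm ..
  have e3 : G.dist m p = G.dist p m := dist_comm ..
  have e4 : G.dist v p = G.dist p v := dist_comm ..
  have e5 : G.dist u p = G.dist p u := dist_comm ..
  omega

/-- Distance formula via the join-median. -/
lemma dist_formula_join (hG : IsMedianGraph G) (hc : G.Connected) {p q u v : V}
    (hu : u ∈ interval G p q) (hv : v ∈ interval G p q) :
    G.dist p u + G.dist p v + G.dist u v = 2 * G.dist p (med hG u v q) := by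
  set m := med hG u v q with hm
  have h1 : m ∈ interval G u v := med_mem₁ hG u v q
  have h2 : u ∈ interval G p m := med_le_join hG hc hu
  have h3 : v ∈ interval G p m := by
    have : m = med hG v u q := by
      apply med_unique hG
      · rw [interval_comm]; exact med_mem₁ hG u v q
      · exact med_mem₃ hG u v q
      · exact med_mem₂ hG u v q
    rw [this]
    exact med_le_join hG hc hv
  rw [mem_interval_iff] at h1 h2 h3
  have e1 : G.dist m v = G.dist v m := dist_comm ..
  omega

/-- Strictness: between and same distance means equal. -/
lemma eq_of_between_dist (hc : G.Connected) {p v w : V} (h : w ∈ interval G p v)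
    (hd : G.dist p w = G.dist p v) : w = v := by
  rw [mem_interval_iff] at h
  have : G.dist w v = 0 := by omega
  exact (hc.dist_eq_zero_iff).1 this

/-- Grading step: any strict betweenness admits a unit first step. -/
lemma grading_step (hc : G.Connected) {p u v : V} (h : u ∈ interval G p v) (hne : u ≠ v) :
    ∃ w, G.dist u w = 1 ∧ u ∈ interval G p w ∧ w ∈ interval G p v := by
  obtain ⟨w, hw1, hw2⟩ := exists_step hc hne
  rw [mem_interval_iff] at h
  refine ⟨w, hw1, ?_, ?_⟩ <;> rw [mem_interval_iff]
  · have t1 : G.dist p w ≤ G.dist p u + G.dist u w := hc.dist_triangle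
    have t2 : G.dist p v ≤ G.dist p w + G.dist w v := hc.dist_triangle
    omega
  · have t1 : G.dist p w ≤ G.dist p u + G.dist u w := hc.dist_triangle
    have t2 : G.dist p v ≤ G.dist p w + G.dist w v := hc.dist_triangle
    omega

end MedianRaw

section MedianRaw2

variable {V : Type*} {G : SimpleGraph V}

lemma med_comm (hG : IsMedianGraph G) (u v b : V) : med hG u v b = med hG v u b := by
  apply med_unique hG
  · rw [interval_comm]; exact med_mem₁ hG u v b
  · exact med_mem₃ hG u v b
  · exact med_mem₂ hG u v b

lemma raw_sup_le (hG : IsMedianGraph G) (hc : G.Connected) {p q u v w : V}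
    (hu : u ∈ interval G p q) (hv : v ∈ interval G p q) (hw : w ∈ interval G p q)
    (h1 : G.dist p u + G.dist u w = G.dist p w)
    (h2 : G.dist p v + G.dist v w = G.dist p w) :
    G.dist p (med hG u v q) + G.dist (med hG u v q) w = G.dist p w := by
  set m := med hG u v q with hm
  have hmS : m ∈ interval G p q :=
    interval_right_subset hc hu (med_mem₃ hG u v q)
  have hwu : w ∈ interval G q u := by
    rw [interval_comm, mem_interval_iff]
    rw [← (le_dual hc hu hw)]
    exact h1
  have hwv : w ∈ interval G q v := by
    rw [interval_comm, mem_interval_iff]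
    rw [← (le_dual hc hv hw)]
    exact h2
  have := med_glb hG hc hwu hwv
  rw [mem_interval_iff, ← hm] at this
  rw [le_dual hc hmS hw]
  have e1 : G.dist q w = G.dist w q := dist_comm ..
  have e2 : G.dist w m = G.dist m w := dist_comm ..
  have e3 : G.dist q m = G.dist m q := dist_comm ..
  omega

end MedianRaw2

section CubeAux

lemma existsUnique_iff_card_filter_eq_one {r : ℕ} (A B : Fin r → Fin 2) :
    (∃! i, A i ≠ B i) ↔ (Finset.univ.filter fun i => A i ≠ B i).card = 1 := by
  classical
  rw [Finset.card_eq_one]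
  constructor
  · rintro ⟨i, hi, huniq⟩
    refine ⟨i, ?_⟩
    ext j
    simp only [Finset.mem_filter, Finset.mem_univ, true_and, Finset.mem_singleton]
    exact ⟨fun hj => huniq j hj, fun hj => hj ▸ hi⟩
  · rintro ⟨i, hi⟩
    have hmem : ∀ j, A j ≠ B j ↔ j = i := by
      intro j
      rw [← Finset.mem_singleton, ← hi]
      simp
    exact ⟨i, (hmem i).2 rfl, fun j hj => (hmem j).1 hj⟩

lemma cubeGraph_adj {r : ℕ} (A B : Fin r → Fin 2) :
    (cubeGraph r).Adj A B ↔ A ≠ B ∧ (∃! i, A i ≠ B i) := by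
  rw [cubeGraph, SimpleGraph.fromRel_adj]
  have : (∃! i, B i ≠ A i) ↔ (∃! i, A i ≠ B i) := by
    constructor <;>
      exact fun ⟨i, hi, hu⟩ => ⟨i, hi.symm, fun j hj => hu j hj.symm⟩
  tauto

lemma ne_iff_card_filter_pos {r : ℕ} (A B : Fin r → Fin 2) :
    A ≠ B ↔ 0 < (Finset.univ.filter fun i => A i ≠ B i).card := by
  classical
  rw [Finset.card_pos]
  constructor
  · intro h
    have : ∃ i, A i ≠ B i := by
      by_contra hcon
      push_neg at hcon
      exact h (funext hcon)
    obtain ⟨i, hi⟩ := this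
    exact ⟨i, by simp [hi]⟩
  · rintro ⟨i, hi⟩
    simp only [Finset.mem_filter] at hi
    exact fun h => hi.2 (h ▸ rfl)

end CubeAux

end IntervalGridAux

/-- If the subgraph of a finite median graph induced by `I(p,q)` contains no
induced `Q_{k+1}` (`k ≥ 1`), then `I(p,q)` isometrically embeds into the grid `ℤ^k`. -/
theorem interval_embeds_grid {V : Type*} [Fintype V] (G : SimpleGraph V)
    (hG : IsMedianGraph G) (p q : V) (k : ℕ) (hk : 1 ≤ k)
    (hfree : ¬ Nonempty (cubeGraph (k + 1) ↪g G.induce (interval G p q))) :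
    ∃ f : V → Fin k → ℤ, ∀ u ∈ interval G p q, ∀ v ∈ interval G p q,
      (G.dist u v : ℤ) = ∑ i : Fin k, |f u i - f v i| := by
  classical
  have hconn : G.Connected := hG.1
  -- Partial order on the interval, with `p` at the bottom
  letI instPO : PartialOrder {x : V // x ∈ interval G p q} :=
    { le := fun u v => G.dist p u.1 + G.dist u.1 v.1 = G.dist p v.1
      le_refl := fun u => by
        show G.dist p u.1 + G.dist u.1 u.1 = G.dist p u.1
        simp
      le_trans := fun u v w h1 h2 => by
        have h1' : G.dist p u.1 + G.dist u.1 v.1 = G.dist p v.1 := h1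
        have h2' : G.dist p v.1 + G.dist v.1 w.1 = G.dist p w.1 := h2
        show G.dist p u.1 + G.dist u.1 w.1 = G.dist p w.1
        have t1 : G.dist p w.1 ≤ G.dist p u.1 + G.dist u.1 w.1 := hconn.dist_triangle
        have t2 : G.dist u.1 w.1 ≤ G.dist u.1 v.1 + G.dist v.1 w.1 := hconn.dist_triangle
        omega
      le_antisymm := fun u v h1 h2 => by
        have h1' : G.dist p u.1 + G.dist u.1 v.1 = G.dist p v.1 := h1
        have h2' : G.dist p v.1 + G.dist v.1 u.1 = G.dist p u.1 := h2
        have e1 : G.dist v.1 u.1 = G.dist u.1 v.1 := dist_comm ..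
        have : G.dist u.1 v.1 = 0 := by omega
        exact Subtype.ext (hconn.dist_eq_zero_iff.1 this) }
  letI instLat : Lattice {x : V // x ∈ interval G p q} :=
    { instPO with
      sup := fun u v =>
        ⟨med hG u.1 v.1 q, interval_right_subset hconn u.2 (med_mem₃ hG u.1 v.1 q)⟩
      le_sup_left := fun u v => med_le_join hG hconn u.2
      le_sup_right := fun u v => by
        show G.dist p v.1 + G.dist v.1 (med hG u.1 v.1 q) = G.dist p (med hG u.1 v.1 q)
        rw [med_comm hG u.1 v.1 q]
        exact med_le_join hG hconn v.2
      sup_le := fun u v w h1 h2 => raw_sup_le hG hconn u.2 v.2 w.2 h1 h2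
      inf := fun u v =>
        ⟨med hG u.1 v.1 p, interval_left_subset hconn u.2
          (by have h := med_mem₃ hG u.1 v.1 p; rwa [interval_comm] at h)⟩
      inf_le_left := fun u v => by
        have h := med_mem₃ hG u.1 v.1 p
        rw [interval_comm] at h
        exact h
      inf_le_right := fun u v => by
        have h := med_mem₂ hG u.1 v.1 p
        rw [interval_comm] at h
        exact h
      le_inf := fun w u v h1 h2 => med_glb hG hconn h1 h2 }
  letI instBot : OrderBot {x : V // x ∈ interval G p q} :=
    { bot := ⟨p, left_mem_interval hconn p q⟩
      bot_le := fun u => by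
        show G.dist p p + G.dist p u.1 = G.dist p u.1
        simp }
  set φ : {x : V // x ∈ interval G p q} → ℕ := fun u => G.dist p u.1 with hφdef
  have hsupval : ∀ u v : {x : V // x ∈ interval G p q},
      (u ⊔ v).1 = med hG u.1 v.1 q := fun _ _ => rfl
  have hinfval : ∀ u v : {x : V // x ∈ interval G p q},
      (u ⊓ v).1 = med hG u.1 v.1 p := fun _ _ => rfl
  have hmod : ∀ u v : {x : V // x ∈ interval G p q},
      φ (u ⊓ v) + φ (u ⊔ v) = φ u + φ v := by
    intro u v
    have f1 := dist_formula_meet hG p u.1 v.1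
    have f2 := dist_formula_join hG hconn u.2 v.2
    simp only [hφdef, hinfval, hsupval]
    omega
  have hdistf : ∀ u v : {x : V // x ∈ interval G p q},
      G.dist u.1 v.1 + 2 * φ (u ⊓ v) = φ u + φ v := by
    intro u v
    have f1 := dist_formula_meet hG p u.1 v.1
    simp only [hφdef, hinfval]
    omega
  have hdistj : ∀ u v : {x : V // x ∈ interval G p q},
      φ u + φ v + G.dist u.1 v.1 = 2 * φ (u ⊔ v) := by
    intro u v
    have f2 := dist_formula_join hG hconn u.2 v.2
    simp only [hφdef, hsupval]
    omega
  have hphile : ∀ u v : {x : V // x ∈ interval G p q}, u ≤ v →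
      φ u + G.dist u.1 v.1 = φ v := fun u v h => h
  have heq_of_le : ∀ u v : {x : V // x ∈ interval G p q}, u ≤ v → φ u = φ v → u = v := by
    intro u v h he
    have h1 := hphile u v h
    have : G.dist u.1 v.1 = 0 := by omega
    exact Subtype.ext (hconn.dist_eq_zero_iff.1 this)
  -- the modular law
  have hmodlaw : ∀ a c b : {x : V // x ∈ interval G p q}, a ≤ b →
      (a ⊔ c) ⊓ b ≤ a ⊔ (c ⊓ b) := by
    intro a c b hab
    have hX : a ⊔ (c ⊓ b) ≤ (a ⊔ c) ⊓ b :=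
      sup_le (le_inf le_sup_left hab) (le_inf (inf_le_left.trans le_sup_right) inf_le_right)
    have e1 : a ⊓ (c ⊓ b) = a ⊓ c := by
      rw [inf_comm c b, ← inf_assoc, inf_eq_left.2 hab]
    have e2 : (a ⊔ c) ⊔ b = c ⊔ b := by
      rw [sup_comm a c, sup_assoc, sup_eq_right.2 hab]
    have m1 := hmod a (c ⊓ b)
    have m2 := hmod (a ⊔ c) b
    have m3 := hmod c b
    have m4 := hmod a c
    rw [e1] at m1
    rw [e2] at m2
    have hrk : φ (a ⊔ (c ⊓ b)) = φ ((a ⊔ c) ⊓ b) := by omega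
    have hXY := heq_of_le _ _ hX hrk
    rw [← hXY]
  -- both lattice median candidates are graph medians
  have hamem : ∀ x y z : {x : V // x ∈ interval G p q},
      ((x ⊓ y) ⊔ ((y ⊓ z) ⊔ (z ⊓ x))).1 ∈ interval G x.1 y.1 := by
    intro x y z
    set a := (x ⊓ y) ⊔ ((y ⊓ z) ⊔ (z ⊓ x)) with ha
    have h1 : x ⊓ y ≤ a := le_sup_left
    have h2 : y ⊓ z ≤ a := le_trans le_sup_left le_sup_right
    have h3 : z ⊓ x ≤ a := le_trans le_sup_right le_sup_right
    have hsup : (x ⊓ a) ⊔ (y ⊓ a) = a := by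
      apply le_antisymm (sup_le inf_le_right inf_le_right)
      rw [ha]
      apply sup_le
      · exact le_trans (le_inf inf_le_left h1) le_sup_left
      · apply sup_le
        · exact le_trans (le_inf inf_le_left h2) le_sup_right
        · exact le_trans (le_inf inf_le_right h3) le_sup_left
    have hinf : (x ⊓ a) ⊓ (y ⊓ a) = x ⊓ y := by
      apply le_antisymm
      · exact le_inf (inf_le_left.trans inf_le_left) (inf_le_right.trans inf_le_left)
      · exact le_inf (le_inf inf_le_left h1) (le_inf inf_le_right h1)
    have m := hmod (x ⊓ a) (y ⊓ a)
    rw [hsup, hinf] at m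
    have d1 := hdistf x a
    have d2 := hdistf y a
    have d3 := hdistf x y
    rw [mem_interval_iff]
    have e1 : G.dist a.1 y.1 = G.dist y.1 a.1 := dist_comm ..
    omega
  have hbmem : ∀ x y z : {x : V // x ∈ interval G p q},
      ((x ⊔ y) ⊓ ((y ⊔ z) ⊓ (z ⊔ x))).1 ∈ interval G x.1 y.1 := by
    intro x y z
    set b := (x ⊔ y) ⊓ ((y ⊔ z) ⊓ (z ⊔ x)) with hb
    have h1 : b ≤ x ⊔ y := inf_le_left
    have h2 : b ≤ y ⊔ z := inf_le_right.trans inf_le_left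
    have h3 : b ≤ z ⊔ x := inf_le_right.trans inf_le_right
    have hinf : (x ⊔ b) ⊓ (y ⊔ b) = b := by
      apply le_antisymm
      · rw [hb]
        apply le_inf
        · exact inf_le_left.trans (sup_le le_sup_left h1)
        · apply le_inf
          · exact inf_le_right.trans (sup_le le_sup_left h2)
          · exact inf_le_left.trans (sup_le le_sup_right h3)
      · exact le_inf le_sup_right le_sup_right
    have hsup : (x ⊔ b) ⊔ (y ⊔ b) = x ⊔ y := by
      apply le_antisymm
      · exact sup_le (sup_le le_sup_left h1) (sup_le le_sup_right h1)
      · exact sup_le (le_sup_left.trans le_sup_left) (le_sup_left.trans le_sup_right)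
    have m := hmod (x ⊔ b) (y ⊔ b)
    rw [hsup, hinf] at m
    have d1 := hdistj x b
    have d2 := hdistj y b
    have d3 := hdistj x y
    rw [mem_interval_iff]
    have e1 : G.dist b.1 y.1 = G.dist y.1 b.1 := dist_comm ..
    omega
  have hstar : ∀ x y z : {x : V // x ∈ interval G p q},
      (x ⊓ y) ⊔ ((y ⊓ z) ⊔ (z ⊓ x)) = (x ⊔ y) ⊓ ((y ⊔ z) ⊓ (z ⊔ x)) := by
    intro x y z
    apply Subtype.ext
    have eaxy : ((x ⊓ y) ⊔ ((y ⊓ z) ⊔ (z ⊓ x))).1 ∈ interval G x.1 y.1 := hamem x y z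
    have eayz : ((x ⊓ y) ⊔ ((y ⊓ z) ⊔ (z ⊓ x))).1 ∈ interval G y.1 z.1 := by
      have h := hamem y z x
      have e : (y ⊓ z) ⊔ ((z ⊓ x) ⊔ (x ⊓ y)) = (x ⊓ y) ⊔ ((y ⊓ z) ⊔ (z ⊓ x)) := by ac_rfl
      rwa [e] at h
    have eaxz : ((x ⊓ y) ⊔ ((y ⊓ z) ⊔ (z ⊓ x))).1 ∈ interval G x.1 z.1 := by
      have h := hamem x z y
      have e : (x ⊓ z) ⊔ ((z ⊓ y) ⊔ (y ⊓ x)) = (x ⊓ y) ⊔ ((y ⊓ z) ⊔ (z ⊓ x)) := by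
        rw [inf_comm x z, inf_comm z y, inf_comm y x]
        ac_rfl
      rwa [e] at h
    have ebxy : ((x ⊔ y) ⊓ ((y ⊔ z) ⊓ (z ⊔ x))).1 ∈ interval G x.1 y.1 := hbmem x y z
    have ebyz : ((x ⊔ y) ⊓ ((y ⊔ z) ⊓ (z ⊔ x))).1 ∈ interval G y.1 z.1 := by
      have h := hbmem y z x
      have e : (y ⊔ z) ⊓ ((z ⊔ x) ⊓ (x ⊔ y)) = (x ⊔ y) ⊓ ((y ⊔ z) ⊓ (z ⊔ x)) := by ac_rfl
      rwa [e] at h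
    have ebxz : ((x ⊔ y) ⊓ ((y ⊔ z) ⊓ (z ⊔ x))).1 ∈ interval G x.1 z.1 := by
      have h := hbmem x z y
      have e : (x ⊔ z) ⊓ ((z ⊔ y) ⊓ (y ⊔ x)) = (x ⊔ y) ⊓ ((y ⊔ z) ⊓ (z ⊔ x)) := by
        rw [sup_comm x z, sup_comm z y, sup_comm y x]
        ac_rfl
      rwa [e] at h
    rw [med_unique hG eaxy eayz eaxz, med_unique hG ebxy ebyz ebxz]
  have hdistrib : ∀ x y z : {x : V // x ∈ interval G p q},
      x ⊓ (y ⊔ z) ≤ (x ⊓ y) ⊔ (x ⊓ z) := by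
    intro x y z
    have hb : x ⊓ ((x ⊔ y) ⊓ ((y ⊔ z) ⊓ (z ⊔ x))) = x ⊓ (y ⊔ z) := by
      apply le_antisymm
      · exact le_inf inf_le_left (inf_le_right.trans (inf_le_right.trans inf_le_left))
      · exact le_inf inf_le_left (le_inf (inf_le_left.trans le_sup_left)
          (le_inf inf_le_right (inf_le_left.trans le_sup_right)))
    have ha : x ⊓ ((x ⊓ y) ⊔ ((y ⊓ z) ⊔ (z ⊓ x))) ≤ (x ⊓ y) ⊔ (x ⊓ z) := by
      have e : (x ⊓ y) ⊔ ((y ⊓ z) ⊔ (z ⊓ x)) = ((x ⊓ y) ⊔ (x ⊓ z)) ⊔ (y ⊓ z) := by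
        rw [inf_comm z x]
        ac_rfl
      rw [e, inf_comm]
      refine le_trans (hmodlaw ((x ⊓ y) ⊔ (x ⊓ z)) (y ⊓ z) x
        (sup_le inf_le_left inf_le_left)) ?_
      apply sup_le le_rfl
      exact le_trans (le_inf inf_le_right (inf_le_left.trans inf_le_left)) le_sup_left
    calc x ⊓ (y ⊔ z) = x ⊓ ((x ⊔ y) ⊓ ((y ⊔ z) ⊓ (z ⊔ x))) := hb.symm
    _ = x ⊓ ((x ⊓ y) ⊔ ((y ⊓ z) ⊔ (z ⊓ x))) := by rw [← hstar x y z]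
    _ ≤ (x ⊓ y) ⊔ (x ⊓ z) := ha
  letI instDL : DistribLattice {x : V // x ∈ interval G p q} :=
    DistribLattice.ofInfSupLe hdistrib
  -- grading
  have hgrade : ∀ u v : {x : V // x ∈ interval G p q}, u ⋖ v → φ v = φ u + 1 := by
    intro u v hcov
    have hlt := hcov.1
    have hne : u.1 ≠ v.1 := fun he => hlt.ne (Subtype.ext he)
    have humem : u.1 ∈ interval G p v.1 := hlt.le
    obtain ⟨w, hw1, hw2, hw3⟩ := grading_step hconn humem hne
    have hwS : w ∈ interval G p q := interval_left_subset hconn v.2 hw3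
    have huW : u ≤ (⟨w, hwS⟩ : {x : V // x ∈ interval G p q}) := hw2
    have hWv : (⟨w, hwS⟩ : {x : V // x ∈ interval G p q}) ≤ v := hw3
    have huneW : u ≠ (⟨w, hwS⟩ : {x : V // x ∈ interval G p q}) := by
      intro he
      have : u.1 = w := congrArg Subtype.val he
      rw [← this] at hw1
      simp at hw1
    have hWeq : (⟨w, hwS⟩ : {x : V // x ∈ interval G p q}) = v := by
      by_contra hWv'
      exact hcov.2 (lt_of_le_of_ne huW huneW) (lt_of_le_of_ne hWv hWv')
    have hstep := hphile u ⟨w, hwS⟩ huW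
    rw [hWeq] at hstep
    rw [← hstep]
    have : G.dist u.1 (⟨w, hwS⟩ : {x : V // x ∈ interval G p q}).1 = 1 := hw1
    rw [hWeq] at this
    omega
  have hφbot : φ ⊥ = 0 := by
    show G.dist p p = 0
    simp
  have hφrk : ∀ u : {x : V // x ∈ interval G p q}, φ u = rkk u :=
    phi_eq_rkk φ hφbot hgrade
  -- antichain bound from cube-freeness
  have hac : ∀ A : Finset {x : V // x ∈ interval G p q}, (∀ a ∈ A, SupIrred a) →
      IsAntichain (· ≤ ·) (A : Set {x : V // x ∈ interval G p q}) → A.card ≤ k := by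
    by_contra hcon
    push_neg at hcon
    obtain ⟨A, hirr, hanti, hcard⟩ := hcon
    obtain ⟨A', hA'sub, hA'card⟩ := Finset.exists_subset_card_eq (by omega : k + 1 ≤ A.card)
    have hirr' : ∀ a ∈ A', SupIrred a := fun a ha => hirr a (hA'sub ha)
    have hanti' : IsAntichain (· ≤ ·) (A' : Set {x : V // x ∈ interval G p q}) :=
      hanti.subset (by exact_mod_cast hA'sub)
    set e := A'.equivFinOfCardEq hA'card with he
    set c : Fin (k + 1) → {x : V // x ∈ interval G p q} := fun i => (e.symm i).1 with hc
    have hcmem : ∀ i, c i ∈ A' := fun i => (e.symm i).2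
    have hcinj : Function.Injective c := fun i j hij => by
      have : e.symm i = e.symm j := Subtype.ext hij
      exact e.symm.injective this
    obtain ⟨g, hg⟩ := latB (k + 1) c hcinj (fun i => hirr' _ (hcmem i))
      (fun i j hij hle => hanti' (by exact_mod_cast hcmem i) (by exact_mod_cast hcmem j)
        (fun hcc => hij (hcinj hcc)) hle)
    have hd : ∀ A B : Fin (k + 1) → Fin 2,
        (G.dist (g A).1 (g B).1 : ℤ) =
          ((Finset.univ.filter fun i => A i ≠ B i).card : ℤ) := by
      intro A B
      have h1 := hg A B
      have h2 := hdistf (g A) (g B)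
      rw [hφrk, hφrk, hφrk] at h2
      omega
    have hmapinj : Function.Injective g := by
      intro A B heq
      by_contra hne
      have h0 : 0 < (Finset.univ.filter fun i => A i ≠ B i).card :=
        (ne_iff_card_filter_pos A B).1 hne
      have h1 := hd A B
      rw [heq] at h1
      simp only [SimpleGraph.dist_self] at h1
      omega
    refine hfree ⟨⟨⟨g, hmapinj⟩, ?_⟩⟩
    intro A B
    show (G.induce (interval G p q)).Adj (g A) (g B) ↔ (cubeGraph (k + 1)).Adj A B
    have hadj : (G.induce (interval G p q)).Adj (g A) (g B) ↔ G.Adj (g A).1 (g B).1 :=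
      Iff.rfl
    rw [hadj, cubeGraph_adj]
    constructor
    · intro h
      have h1 : G.dist (g A).1 (g B).1 = 1 := dist_eq_one_iff_adj.2 h
      have h2 := hd A B
      have hcard1 : (Finset.univ.filter fun i => A i ≠ B i).card = 1 := by omega
      exact ⟨(ne_iff_card_filter_pos A B).2 (by omega),
        (existsUnique_iff_card_filter_eq_one A B).2 hcard1⟩
    · rintro ⟨hne, huniq⟩
      have hcard1 := (existsUnique_iff_card_filter_eq_one A B).1 huniq
      have h2 := hd A B
      have : G.dist (g A).1 (g B).1 = 1 := by omega
      exact dist_eq_one_iff_adj.1 this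
  -- conclude with the grid embedding from Dilworth
  obtain ⟨f, hf⟩ := latA k hac
  refine ⟨fun v => if h : v ∈ interval G p q then f ⟨v, h⟩ else 0, ?_⟩
  intro u hu v hv
  simp only [dif_pos hu, dif_pos hv]
  have h1 := hf ⟨u, hu⟩ ⟨v, hv⟩
  have h2 := hdistf ⟨u, hu⟩ ⟨v, hv⟩
  rw [hφrk, hφrk, hφrk] at h2
  have h2' : G.dist u v + 2 * rkk ((⟨u, hu⟩ : {x : V // x ∈ interval G p q}) ⊓ ⟨v, hv⟩) =
      rkk (⟨u, hu⟩ : {x : V // x ∈ interval G p q}) + rkk (⟨v, hv⟩ : {x : V // x ∈ interval G p q}) := h2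
  rw [← h1]
  omega
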